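/- Let G be a cyclic group (written additively) and S ⊆ G a nonempty full reflection space. Then either S = G, or G ≠ 2G and S = 2G + s for every s ∈ G ∖ 2G. In particular, if S is a full pointed reflection space of a cyclic group G, then S = G. -/

import Mathlib

/-- A nonempty full reflection space `S` of a cyclic group `G` is `G` itself, or `G ≠ 2G` and
`S = 2G + s` for every `s ∈ G ∖ 2G`. In particular a full pointed reflection space equals `G`. -/
theorem full_reflection_space_of_cyclic_group
    {G : Type*} [AddCommGroup G] [IsAddCyclic G]
    (S : Set G) (hne : S.Nonempty)
    (hrefl : ∀ e ∈ S, ∀ e' ∈ S, e - 2 • e' ∈ S)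
    (hfull : AddSubgroup.closure S = ⊤) :
    (S = Set.univ ∨
      (Set.range (fun g : G => 2 • g) ≠ Set.univ ∧
        ∀ s : G, s ∉ Set.range (fun g : G => 2 • g) →
          S = {x : G | ∃ g : G, x = 2 • g + s})) ∧
    (0 ∈ S → S = Set.univ) := by
  classical
  set R := Set.range (fun g : G => 2 • g) with hRdef
  have hRzero : (0 : G) ∈ R := ⟨0, by simp⟩
  have hRadd : ∀ {a b : G}, a ∈ R → b ∈ R → a + b ∈ R := by
    rintro a b ⟨u, rfl⟩ ⟨v, rfl⟩
    exact ⟨u + v, by simp only [two_nsmul]; abel⟩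
  have hRneg : ∀ {a : G}, a ∈ R → -a ∈ R := by
    rintro a ⟨u, rfl⟩; exact ⟨-u, by simp only [two_nsmul]; abel⟩
  have hRsub : ∀ {a b : G}, a ∈ R → b ∈ R → a - b ∈ R := fun ha hb => by
    rw [sub_eq_add_neg]; exact hRadd ha (hRneg hb)
  obtain ⟨g, hg⟩ := IsAddCyclic.exists_generator (α := G)
  have hEven : ∀ k : ℤ, ((k + k) • g : G) ∈ R :=
    fun k => ⟨k • g, by show (2 : ℕ) • (k • g) = (k + k) • g; rw [two_nsmul, ← add_zsmul]⟩
  have hkey : ∀ x y : G, x ∉ R → y ∉ R → x - y ∈ R := by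
    intro x y hx hy
    obtain ⟨m, hm⟩ := AddSubgroup.mem_zmultiples_iff.1 (hg x)
    obtain ⟨n, hn⟩ := AddSubgroup.mem_zmultiples_iff.1 (hg y)
    rcases Int.even_or_odd m with ⟨k, hk⟩ | ⟨k, hk⟩
    · exact absurd (by rw [← hm, hk]; exact hEven k) hx
    rcases Int.even_or_odd n with ⟨l, hl⟩ | ⟨l, hl⟩
    · exact absurd (by rw [← hn, hl]; exact hEven l) hy
    have h1 : x - y = (m - n) • g := by rw [← hm, ← hn, sub_zsmul]; abel_nf
    rw [h1, hk, hl, show 2 * k + 1 - (2 * l + 1) = (k - l) + (k - l) by ring]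
    exact hEven _
  -- basic consequences of the reflection property
  have hneg : ∀ e ∈ S, -e ∈ S := by
    intro e he
    have h := hrefl e he e he
    rwa [show e - 2 • e = -e by rw [two_nsmul]; abel] at h
  have hsub2 : ∀ e ∈ S, ∀ f ∈ S, e + 2 • f ∈ S := by
    intro e he f hf
    have h := hneg _ (hrefl (-e) (hneg e he) f hf)
    rwa [show -(-e - 2 • f) = e + 2 • f by abel] at h
  have hstep : ∀ x ∈ AddSubgroup.closure S, ∀ e ∈ S, e + 2 • x ∈ S := by
    intro x hx
    induction hx using AddSubgroup.closure_induction with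
    | mem s hs => exact fun e he => hsub2 e he s hs
    | zero => intro e he; simpa using he
    | add a b _ _ iha ihb =>
        intro e he
        have h := ihb _ (iha e he)
        rwa [show e + 2 • a + 2 • b = e + 2 • (a + b) by abel] at h
    | neg a _ iha =>
        intro e he
        have h := hneg _ (iha (-e) (hneg e he))
        rwa [show -(-e + 2 • a) = e + 2 • (-a) by abel] at h
  have hall : ∀ e ∈ S, ∀ x : G, e + 2 • x ∈ S := by
    intro e he x
    exact hstep x (by rw [hfull]; trivial) e he
  have hcoset : ∀ e ∈ S, ∀ x : G, x - e ∈ R → x ∈ S := by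
    rintro e he x ⟨h, hh⟩
    have hh' : (2 : ℕ) • h = x - e := hh
    have hx : x = e + 2 • h := by rw [hh']; abel
    rw [hx]; exact hall e he h
  by_cases hO : ∃ o ∈ S, o ∉ R
  · obtain ⟨o, hoS, hoR⟩ := hO
    by_cases hE : ∃ e ∈ S, e ∈ R
    · obtain ⟨e, heS, heR⟩ := hE
      have huniv : S = Set.univ := by
        ext x
        simp only [Set.mem_univ, iff_true]
        by_cases hx : x ∈ R
        · exact hcoset e heS x (hRsub hx heR)
        · exact hcoset o hoS x (hkey x o hx hoR)
      exact ⟨Or.inl huniv, fun _ => huniv⟩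
    · push_neg at hE
      have hRne : R ≠ Set.univ := fun h => hoR (by rw [h]; trivial)
      have hmain : ∀ s : G, s ∉ R → S = {x : G | ∃ g : G, x = 2 • g + s} := by
        intro s hs
        ext x
        constructor
        · intro hxS
          obtain ⟨h, hh⟩ := hkey x s (hE x hxS) hs
          have hh' : (2 : ℕ) • h = x - s := hh
          exact ⟨h, by rw [hh']; abel⟩
        · rintro ⟨h, rfl⟩
          have hsS : s ∈ S := hcoset o hoS s (hkey s o hs hoR)
          exact hcoset s hsS _ ⟨h, by abel⟩
      exact ⟨Or.inr ⟨hRne, hmain⟩, fun h0 => (hE 0 h0 hRzero).elim⟩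
  · push_neg at hO
    have hRall : ∀ x : G, x ∈ R := by
      intro x
      have hx : x ∈ AddSubgroup.closure S := by rw [hfull]; trivial
      induction hx using AddSubgroup.closure_induction with
      | mem s hs => exact hO s hs
      | zero => exact hRzero
      | add a b _ _ iha ihb => exact hRadd iha ihb
      | neg a _ iha => exact hRneg iha
    obtain ⟨s0, hs0⟩ := hne
    have huniv : S = Set.univ := by
      ext x
      simp only [Set.mem_univ, iff_true]
      exact hcoset s0 hs0 x (hRall _)
    exact ⟨Or.inl huniv, fun _ => huniv⟩
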